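/- Let q_{00}, q_{10} > 0, σ_{ia} > 0 and μ_{ia} ∈ ℝ for i,a ∈ {0,1}, and fix γ > 0. The minimum over μ̃_{00}, μ̃_{10} ∈ ℝ and σ̃_{00}, σ̃_{10} > 0 of the objective Σ_{i∈{0,1}} q_{i0} [ (μ̃_{i0} − μ_{i0})²/(2σ_{i0}²) + (σ̃_{i0}² − σ_{i0}²)/(2σ_{i0}²) + log(σ_{i0}/σ̃_{i0}) ], subject to the constraints σ̃_{00} = γ σ_{01}, σ̃_{10} = γ σ_{11}, and μ̃_{00} − μ̃_{10} = γ(μ_{01} − μ_{11}), equals L*_γ = (1/2)(σ_{00}²/q_{00} + σ_{10}²/q_{10})^{-1} ((μ_{00} − μ_{10}) − γ(μ_{01} − μ_{11}))² + q_{00}(γ² σ_{01}² − σ_{00}²)/(2σ_{00}²) + q_{10}(γ² σ_{11}² − σ_{10}²)/(2σ_{10}²) + (q_{00} + q_{10}) log(1/γ) + q_{00} log(σ_{00}/σ_{01}) + q_{10} log(σ_{10}/σ_{11}). Moreover, the function γ ↦ L*_γ is convex on (0, ∞). -/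

import Mathlib

lemma quad_convex (p q r : ℝ) (hp : 0 ≤ p) :
    ConvexOn ℝ (Set.Ioi (0:ℝ)) (fun g => p*g^2 + q*g + r) := by
  refine ⟨convex_Ioi 0, ?_⟩
  intro x _ y _ a b ha hb hab
  simp only [smul_eq_mul]
  have hb' : b = 1 - a := by linarith
  subst hb'
  nlinarith [mul_nonneg hp (mul_nonneg (mul_nonneg ha hb) (sq_nonneg (x-y)))]

theorem statement7 (q00 q10 : ℝ) (s00 s10 s01 s11 : ℝ) (m00 m10 m01 m11 : ℝ) (γ : ℝ)
    (hq00 : 0 < q00) (hq10 : 0 < q10) (hs00 : 0 < s00) (hs10 : 0 < s10)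
    (hs01 : 0 < s01) (hs11 : 0 < s11) (hγ : 0 < γ)
    (L : ℝ → ℝ)
    (hL : ∀ g : ℝ, L g =
      (1 / 2) * (s00 ^ 2 / q00 + s10 ^ 2 / q10)⁻¹ *
          ((m00 - m10) - g * (m01 - m11)) ^ 2 +
        q00 * (g ^ 2 * s01 ^ 2 - s00 ^ 2) / (2 * s00 ^ 2) +
        q10 * (g ^ 2 * s11 ^ 2 - s10 ^ 2) / (2 * s10 ^ 2) +
        (q00 + q10) * Real.log (1 / g) +
        q00 * Real.log (s00 / s01) + q10 * Real.log (s10 / s11)) :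
    IsLeast
      {z : ℝ | ∃ a b c e : ℝ, 0 < c ∧ 0 < e ∧
        c = γ * s01 ∧ e = γ * s11 ∧ a - b = γ * (m01 - m11) ∧
        z = q00 * ((a - m00) ^ 2 / (2 * s00 ^ 2) + (c ^ 2 - s00 ^ 2) / (2 * s00 ^ 2) +
              Real.log (s00 / c)) +
            q10 * ((b - m10) ^ 2 / (2 * s10 ^ 2) + (e ^ 2 - s10 ^ 2) / (2 * s10 ^ 2) +
              Real.log (s10 / e))}
      (L γ) ∧
    ConvexOn ℝ (Set.Ioi (0 : ℝ)) L := by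
  have hW : (0:ℝ) < q00 * s10 ^ 2 + q10 * s00 ^ 2 := by positivity
  have hS : (0:ℝ) < s00 ^ 2 / q00 + s10 ^ 2 / q10 := by positivity
  have hKeq : (s00 ^ 2 / q00 + s10 ^ 2 / q10)⁻¹ = q00 * q10 / (q00 * s10 ^ 2 + q10 * s00 ^ 2) := by
    rw [div_add_div _ _ hq00.ne' hq10.ne', inv_div]
    ring_nf
  have hlog0 : Real.log (s00 / (γ * s01)) = Real.log (1/γ) + Real.log (s00 / s01) := by
    rw [Real.log_div hs00.ne' (by positivity), Real.log_mul hγ.ne' hs01.ne',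
      Real.log_div hs00.ne' hs01.ne', one_div, Real.log_inv]
    ring
  have hlog1 : Real.log (s10 / (γ * s11)) = Real.log (1/γ) + Real.log (s10 / s11) := by
    rw [Real.log_div hs10.ne' (by positivity), Real.log_mul hγ.ne' hs11.ne',
      Real.log_div hs10.ne' hs11.ne', one_div, Real.log_inv]
    ring
  refine ⟨⟨?_, ?_⟩, ?_⟩
  · -- membership
    refine ⟨m00 - q10 * s00 ^ 2 * ((m00 - m10) - γ * (m01 - m11)) / (q00 * s10 ^ 2 + q10 * s00 ^ 2),
      (m00 - q10 * s00 ^ 2 * ((m00 - m10) - γ * (m01 - m11)) / (q00 * s10 ^ 2 + q10 * s00 ^ 2))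
        - γ * (m01 - m11),
      γ * s01, γ * s11, by positivity, by positivity, rfl, rfl, by ring, ?_⟩
    rw [hL, hKeq, hlog0, hlog1]
    field_simp
    ring
  · -- lower bound
    rintro z ⟨a, b, c, e, hc, he, rfl, rfl, hab, rfl⟩
    have hb : b = a - γ * (m01 - m11) := by linarith
    subst hb
    rw [hL, hKeq, hlog0, hlog1]
    have key : 0 ≤ (q00 * s10 ^ 2 * (a - m00) + q10 * s00 ^ 2 * (a - γ * (m01 - m11) - m10)) ^ 2 /
        (2 * s00 ^ 2 * s10 ^ 2 * (q00 * s10 ^ 2 + q10 * s00 ^ 2)) := by positivity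
    rw [← sub_nonneg]
    have heq : q00 * ((a - m00) ^ 2 / (2 * s00 ^ 2) + ((γ * s01) ^ 2 - s00 ^ 2) / (2 * s00 ^ 2) +
              (Real.log (1/γ) + Real.log (s00 / s01))) +
            q10 * (((a - γ * (m01 - m11)) - m10) ^ 2 / (2 * s10 ^ 2) +
              ((γ * s11) ^ 2 - s10 ^ 2) / (2 * s10 ^ 2) +
              (Real.log (1/γ) + Real.log (s10 / s11))) -
        (1 / 2 * (q00 * q10 / (q00 * s10 ^ 2 + q10 * s00 ^ 2)) *
            ((m00 - m10) - γ * (m01 - m11)) ^ 2 +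
          q00 * (γ ^ 2 * s01 ^ 2 - s00 ^ 2) / (2 * s00 ^ 2) +
          q10 * (γ ^ 2 * s11 ^ 2 - s10 ^ 2) / (2 * s10 ^ 2) +
          (q00 + q10) * Real.log (1 / γ) +
          q00 * Real.log (s00 / s01) + q10 * Real.log (s10 / s11)) =
        (q00 * s10 ^ 2 * (a - m00) + q10 * s00 ^ 2 * (a - γ * (m01 - m11) - m10)) ^ 2 /
        (2 * s00 ^ 2 * s10 ^ 2 * (q00 * s10 ^ 2 + q10 * s00 ^ 2)) := by
      field_simp
      ring
    rw [heq]
    exact key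
  · -- convexity
    set K := (s00 ^ 2 / q00 + s10 ^ 2 / q10)⁻¹ with hKdef
    have hK : 0 ≤ K := le_of_lt (inv_pos.mpr hS)
    set P := (1/2) * K * (m01 - m11) ^ 2 + q00 * s01 ^ 2 / (2 * s00 ^ 2) +
      q10 * s11 ^ 2 / (2 * s10 ^ 2) with hPdef
    set Q := -(K * (m00 - m10) * (m01 - m11)) with hQdef
    set R := (1/2) * K * (m00 - m10) ^ 2 - q00 * s00 ^ 2 / (2 * s00 ^ 2) -
      q10 * s10 ^ 2 / (2 * s10 ^ 2) +
      q00 * Real.log (s00 / s01) + q10 * Real.log (s10 / s11) with hRdef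
    have hP : 0 ≤ P := by
      rw [hPdef]
      have h1 : (0:ℝ) ≤ (1/2) * K * (m01 - m11) ^ 2 := by positivity
      have h2 : (0:ℝ) ≤ q00 * s01 ^ 2 / (2 * s00 ^ 2) := by positivity
      have h3 : (0:ℝ) ≤ q10 * s11 ^ 2 / (2 * s10 ^ 2) := by positivity
      linarith
    have hlogc : ConvexOn ℝ (Set.Ioi (0:ℝ)) (fun g => -((q00 + q10) * Real.log g)) := by
      have h := (strictConcaveOn_log_Ioi.neg).convexOn
      have h2 := h.smul (le_of_lt (by positivity : (0:ℝ) < q00 + q10))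
      convert h2 using 2 with g
      case e'_12 => simp [smul_eq_mul]
      all_goals rfl
    have hquad := quad_convex P Q R hP
    have hsum := hquad.add hlogc
    have hLeq : L = (fun g => P * g ^ 2 + Q * g + R) + fun g => -((q00 + q10) * Real.log g) := by
      funext g
      simp only [Pi.add_apply]
      rw [hL g, hPdef, hQdef, hRdef]
      simp only [one_div, Real.log_inv]
      ring
    rw [hLeq]
    exact hsum
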